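/- If {x_n} is a log-convex sequence of nonnegative real numbers, then z_n = ∑_{k=0}^{n} c(n,k) x_k is log-convex, where c(n,k) are the signless Stirling numbers of the first kind. -/

import Mathlib

def LogConvex (a : ℕ → ℝ) : Prop := ∀ n : ℕ, a n * a (n + 2) ≥ a (n + 1) ^ 2

/-- Signless Stirling numbers of the first kind. -/
def stirling1 : ℕ → ℕ → ℕ
  | 0, 0 => 1
  | 0, _ + 1 => 0
  | _ + 1, 0 => 0
  | n + 1, k + 1 => n * stirling1 n (k + 1) + stirling1 n k

lemma stirling1_eq_zero_of_lt : ∀ {n k : ℕ}, n < k → stirling1 n k = 0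
  | 0, _+1, _ => rfl
  | n+1, k+1, h => by
      rw [stirling1, stirling1_eq_zero_of_lt (show n < k+1 by omega),
        stirling1_eq_zero_of_lt (show n < k by omega)]
      ring

noncomputable def stS (x : ℕ → ℝ) (m n : ℕ) : ℝ :=
  ∑ k ∈ Finset.range (n+1), (stirling1 n k : ℝ) * x (k + m)

lemma stS_nonneg (x : ℕ → ℝ) (hx0 : ∀ n, 0 ≤ x n) (m n : ℕ) : 0 ≤ stS x m n := by
  unfold stS
  exact Finset.sum_nonneg fun k _ => mul_nonneg (by positivity) (hx0 _)

lemma stS_rec (x : ℕ → ℝ) (m n : ℕ) :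
    stS x m (n+1) = n * stS x m n + stS x (m+1) n := by
  unfold stS
  rw [Finset.sum_range_succ' (fun k => (stirling1 (n+1) k : ℝ) * x (k + m))]
  have h0 : (stirling1 (n+1) 0 : ℝ) = 0 := by
    have : stirling1 (n+1) 0 = 0 := rfl
    simp [this]
  have hrec : ∀ k, (stirling1 (n+1) (k+1) : ℝ)
      = n * stirling1 n (k+1) + stirling1 n k := by
    intro k; rw [stirling1]; push_cast; ring
  simp only [hrec, h0, zero_mul, add_zero]
  have hsplit : ∀ k, ((n : ℝ) * stirling1 n (k+1) + stirling1 n k) * x (k + 1 + m)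
      = n * ((stirling1 n (k+1) : ℝ) * x (k + 1 + m))
        + (stirling1 n k : ℝ) * x (k + (m+1)) := by
    intro k
    rw [show k + (m+1) = k + 1 + m from by omega]
    ring
  simp only [hsplit]
  rw [Finset.sum_add_distrib, ← Finset.mul_sum]
  congr 1
  rcases n with _ | n'
  · simp
  · congr 1
    rw [Finset.sum_range_succ, stirling1_eq_zero_of_lt (by omega)]
    rw [Finset.sum_range_succ' (fun k => (stirling1 (n'+1) k : ℝ) * x (k + m))]
    have h0' : (stirling1 (n'+1) 0 : ℝ) = 0 := by norm_num [stirling1]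
    simp [h0']

lemma stS_sq (x : ℕ → ℝ) (hx0 : ∀ n, 0 ≤ x n) (hx : LogConvex x) (n : ℕ) :
    stS x 1 n ^ 2 ≤ stS x 0 n * stS x 2 n := by
  set f : ℕ → ℝ := fun k => Real.sqrt ((stirling1 n k : ℝ) * x (k + 0)) with hf
  set g : ℕ → ℝ := fun k => Real.sqrt ((stirling1 n k : ℝ) * x (k + 2)) with hg
  have hkey : stS x 1 n ≤ ∑ k ∈ Finset.range (n+1), f k * g k := by
    apply Finset.sum_le_sum
    intro k _
    simp only [hf, hg]
    rw [← Real.sqrt_mul (mul_nonneg (Nat.cast_nonneg _) (hx0 _))]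
    have h1 : ((stirling1 n k : ℝ) * x (k+1))^2
        ≤ (stirling1 n k : ℝ) * x (k+0) * ((stirling1 n k : ℝ) * x (k+2)) := by
      have h2 := hx k
      have h3 : (0:ℝ) ≤ ((stirling1 n k : ℝ))^2 := sq_nonneg _
      have h4 := mul_le_mul_of_nonneg_left h2 h3
      simp only [add_zero] at *
      nlinarith
    calc (stirling1 n k : ℝ) * x (k+1)
        = Real.sqrt (((stirling1 n k : ℝ) * x (k+1))^2) := by
          rw [Real.sqrt_sq (mul_nonneg (Nat.cast_nonneg _) (hx0 _))]
      _ ≤ _ := Real.sqrt_le_sqrt h1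
  have hfg : (∑ k ∈ Finset.range (n+1), f k * g k)^2
      ≤ (∑ k ∈ Finset.range (n+1), f k ^ 2) * (∑ k ∈ Finset.range (n+1), g k ^ 2) :=
    Finset.sum_mul_sq_le_sq_mul_sq _ _ _
  have hf2 : ∑ k ∈ Finset.range (n+1), f k ^ 2 = stS x 0 n := by
    unfold stS
    refine Finset.sum_congr rfl fun k _ => ?_
    simp only [hf]
    rw [Real.sq_sqrt (mul_nonneg (Nat.cast_nonneg _) (hx0 _))]
  have hg2 : ∑ k ∈ Finset.range (n+1), g k ^ 2 = stS x 2 n := by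
    unfold stS
    refine Finset.sum_congr rfl fun k _ => ?_
    simp only [hg]
    rw [Real.sq_sqrt (mul_nonneg (Nat.cast_nonneg _) (hx0 _))]
  have hS1 : 0 ≤ stS x 1 n := stS_nonneg x hx0 1 n
  calc stS x 1 n ^ 2 ≤ (∑ k ∈ Finset.range (n+1), f k * g k)^2 := by
        apply pow_le_pow_left₀ hS1 hkey _
    _ ≤ _ := by rw [← hf2, ← hg2]; exact hfg

theorem logConvex_stirling1_transform (x : ℕ → ℝ)
    (hx0 : ∀ n, 0 ≤ x n) (hx : LogConvex x) :
    LogConvex (fun n => ∑ k ∈ Finset.range (n + 1), (stirling1 n k : ℝ) * x k) := by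
  intro n
  have hz : ∀ m, (∑ k ∈ Finset.range (m + 1), (stirling1 m k : ℝ) * x k) = stS x 0 m := by
    intro m; unfold stS; simp
  simp only [hz]
  have h1 := stS_rec x 0 n
  have h2 := stS_rec x 0 (n+1)
  have h3 := stS_rec x 1 n
  norm_num at h1 h2 h3
  have ha := stS_nonneg x hx0 0 n
  have hb := stS_nonneg x hx0 1 n
  have hc := stS_nonneg x hx0 2 n
  have hq := stS_sq x hx0 hx n
  have hn : (0:ℝ) ≤ n := Nat.cast_nonneg n
  rw [h2, h1, h3]
  nlinarith [mul_nonneg ha hb, mul_nonneg hn (mul_nonneg ha ha)]
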